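/- Let 0 < α < 1, λ > 0, and d ∈ ℝ − ℤ_{<0}. With w(j) = j^{d-1} e^{-λj} for j ≥ 1, one has lim_{n→∞} e^{λαn} n^{-α(d-1)} ∑_{j=0}^∞ w(j+n)^α = 1/(1 − e^{-λα}). -/

import Mathlib

open Filter Real

/-- Asymptotic tempered kernel w(j) = j^{d-1} e^{-λj}. -/
noncomputable def temperedKernel (d lam : ℝ) (j : ℕ) : ℝ :=
  (j : ℝ) ^ (d - 1) * Real.exp (-lam * j)

theorem tail_sum_asymptotics (α lam d : ℝ) (hα0 : 0 < α) (hα1 : α < 1)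
    (hlam : 0 < lam) (hd : ∀ n : ℕ, d ≠ -((n : ℝ) + 1)) :
    Tendsto (fun n : ℕ =>
        Real.exp (lam * α * n) * (n : ℝ) ^ (-(α * (d - 1))) *
          ∑' j : ℕ, (temperedKernel d lam (j + n)) ^ α)
      atTop (nhds (1 / (1 - Real.exp (-lam * α)))) := by
  set β := α * (d - 1) with hβ
  set r := Real.exp (-(lam * α)) with hr
  have hr0 : 0 < r := Real.exp_pos _
  have hr1 : r < 1 := by
    rw [hr, Real.exp_lt_one_iff]
    nlinarith
  -- dominating bound
  set k := ⌈|β|⌉₊ with hk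
  have hbound_sum : Summable (fun j : ℕ => ((j : ℝ) + 1) ^ k * r ^ j) := by
    have h := summable_pow_mul_geometric_of_norm_lt_one (R := ℝ) k (r := r)
      (by rw [norm_of_nonneg hr0.le]; exact hr1)
    have h2 : Summable (fun j : ℕ => ((j + 1 : ℕ) : ℝ) ^ k * r ^ (j + 1)) :=
      h.comp_injective Nat.succ_injective
    have h3 := h2.mul_left r⁻¹
    refine h3.congr fun j => ?_
    push_cast
    field_simp
    ring
  -- T n j
  have key : Tendsto (fun n : ℕ => ∑' j : ℕ,
      (((j : ℝ) + n) / n) ^ β * r ^ j) atTop (nhds (1 / (1 - r))) := by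
    have hsum : ∑' j : ℕ, r ^ j = 1 / (1 - r) := by
      rw [tsum_geometric_of_lt_one hr0.le hr1, one_div]
    rw [← hsum]
    apply tendsto_tsum_of_dominated_convergence hbound_sum
    · intro j
      have h1 : Tendsto (fun n : ℕ => ((j : ℝ) + n) / n) atTop (nhds 1) := by
        have : (fun n : ℕ => ((j : ℝ) + n) / n) =ᶠ[atTop] fun n : ℕ => (j : ℝ) / n + 1 := by
          filter_upwards [eventually_gt_atTop 0] with n hn
          have : (n : ℝ) ≠ 0 := Nat.cast_ne_zero.2 hn.ne'
          field_simp
        rw [tendsto_congr' this]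
        have := (tendsto_const_nhds (x := (j : ℝ)) (f := atTop)).div_atTop
          (tendsto_natCast_atTop_atTop (R := ℝ))
        simpa using this.add tendsto_const_nhds
      have h2 : Tendsto (fun n : ℕ => (((j : ℝ) + n) / n) ^ β) atTop (nhds 1) := by
        have := (Real.continuousAt_rpow_const 1 β (Or.inl one_ne_zero)).tendsto.comp h1
        simpa [Function.comp_def] using this
      simpa using h2.mul_const (r ^ j)
    · filter_upwards [eventually_ge_atTop 1] with n hn j
      have hn0 : (0 : ℝ) < n := by exact_mod_cast hn
      have hq1 : (1 : ℝ) ≤ ((j : ℝ) + n) / n := by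
        rw [le_div_iff₀ hn0]; simp [Nat.cast_nonneg]
      have hqj : ((j : ℝ) + n) / n ≤ (j : ℝ) + 1 := by
        rw [div_le_iff₀ hn0]
        have h1n : (1 : ℝ) ≤ (n : ℝ) := by exact_mod_cast hn
        nlinarith [Nat.cast_nonneg (α := ℝ) j]
      have hq0 : (0 : ℝ) < ((j : ℝ) + n) / n := lt_of_lt_of_le one_pos hq1
      have hb : (((j : ℝ) + n) / n) ^ β ≤ ((j : ℝ) + 1) ^ k := by
        rcases le_or_gt 0 β with hβ0 | hβ0
        · calc (((j : ℝ) + n) / n) ^ β ≤ ((j : ℝ) + 1) ^ β :=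
                Real.rpow_le_rpow hq0.le hqj hβ0
            _ ≤ ((j : ℝ) + 1) ^ (k : ℝ) := by
                apply Real.rpow_le_rpow_of_exponent_le (by linarith [Nat.cast_nonneg (α := ℝ) j])
                calc β ≤ |β| := le_abs_self β
                  _ ≤ k := Nat.le_ceil _
            _ = ((j : ℝ) + 1) ^ k := by rw [Real.rpow_natCast]
        · calc (((j : ℝ) + n) / n) ^ β ≤ 1 := by
                apply Real.rpow_le_one_of_one_le_of_nonpos hq1 hβ0.le
            _ ≤ ((j : ℝ) + 1) ^ k := one_le_pow₀ (by linarith [Nat.cast_nonneg (α := ℝ) j])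
      rw [norm_of_nonneg (by positivity)]
      exact mul_le_mul_of_nonneg_right hb (by positivity)
  -- rewrite the original function eventually
  have heq : (fun n : ℕ =>
        Real.exp (lam * α * n) * (n : ℝ) ^ (-(α * (d - 1))) *
          ∑' j : ℕ, (temperedKernel d lam (j + n)) ^ α)
      =ᶠ[atTop] (fun n : ℕ => ∑' j : ℕ, (((j : ℝ) + n) / n) ^ β * r ^ j) := by
    filter_upwards [eventually_ge_atTop 1] with n hn
    have hn0 : (0 : ℝ) < n := by exact_mod_cast hn
    rw [← tsum_mul_left]
    congr 1
    ext j
    have hjn : (0 : ℝ) < (j : ℝ) + n := by positivity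
    have hcast : ((j + n : ℕ) : ℝ) = (j : ℝ) + n := by push_cast; ring
    rw [temperedKernel, hcast]
    have h1 : Real.exp (-lam * ((j : ℝ) + n)) ^ α = Real.exp (-lam * ((j : ℝ) + n) * α) :=
      (Real.exp_mul _ _).symm
    have h2 : (((j : ℝ) + n) ^ (d - 1)) ^ α = ((j : ℝ) + n) ^ β := by
      rw [← Real.rpow_mul hjn.le, hβ, mul_comm]
    have h3 : r ^ j = Real.exp (-(lam * α) * j) := by
      rw [hr, ← Real.exp_nat_mul, mul_comm]
    rw [Real.mul_rpow (Real.rpow_nonneg hjn.le _) (Real.exp_pos _).le, h1, h2, h3,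
      Real.div_rpow hjn.le (Nat.cast_nonneg n), Real.rpow_neg (Nat.cast_nonneg n), hβ]
    have hne : (n : ℝ) ^ (α * (d - 1)) ≠ 0 := (Real.rpow_pos_of_pos hn0 _).ne'
    have harg : Real.exp (lam * α * n) * Real.exp (-lam * ((j : ℝ) + n) * α)
        = Real.exp (-(lam * α) * j) := by
      rw [← Real.exp_add]; congr 1; ring
    calc Real.exp (lam * α * n) * ((n : ℝ) ^ (α * (d - 1)))⁻¹ *
          (((j : ℝ) + n) ^ (α * (d - 1)) * Real.exp (-lam * ((j : ℝ) + n) * α))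
        = Real.exp (lam * α * n) * Real.exp (-lam * ((j : ℝ) + n) * α) *
            ((j : ℝ) + n) ^ (α * (d - 1)) * ((n : ℝ) ^ (α * (d - 1)))⁻¹ := by ring
      _ = ((j : ℝ) + n) ^ (α * (d - 1)) / (n : ℝ) ^ (α * (d - 1)) *
            Real.exp (-(lam * α) * j) := by rw [harg, div_eq_mul_inv]; ring
  rw [tendsto_congr' heq]
  convert key using 3
  rw [hr, neg_mul]
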